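/- Let q ≥ 1 be a natural number, Z a set, and S_0, …, S_q nontrivial equivalence relations on Z such that (i) the union of S_0, …, S_q equals Z × Z, (ii) S_i ∩ S_j = Id_Z for all i ≠ j, and (iii) S_i ∘ S_j = Z × Z for all i ≠ j. Then every equivalence class of S_0 has exactly q elements. -/

import Mathlib

/-- Composition of binary relations: `relComp S S' = {(a,b) : ∃ c, (a,c) ∈ S' ∧ (c,b) ∈ S}`. -/
def relComp {Z : Type*} (S S' : Set (Z × Z)) : Set (Z × Z) :=
  {p | ∃ c, (p.1, c) ∈ S' ∧ (c, p.2) ∈ S}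

/-- If `S_0, …, S_q` (`q ≥ 1`) are nontrivial equivalence relations on `Z` whose union is
`Z × Z`, with `S_i ∩ S_j = Id_Z` and `S_i ∘ S_j = Z × Z` for `i ≠ j`, then every
equivalence class of `S_0` has exactly `q` elements. -/
theorem every_class_of_S0_has_q_elements {Z : Type*} (q : ℕ) (hq : 1 ≤ q)
    (S : Fin (q + 1) → Set (Z × Z))
    (hrefl : ∀ i z, (z, z) ∈ S i)
    (hsymm : ∀ i a b, (a, b) ∈ S i → (b, a) ∈ S i)
    (htrans : ∀ i a b c, (a, b) ∈ S i → (b, c) ∈ S i → (a, c) ∈ S i)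
    (hnontriv : ∀ i, S i ≠ Set.diagonal Z)
    (hunion : (⋃ i, S i) = Set.univ)
    (hinter : ∀ i j, i ≠ j → S i ∩ S j = Set.diagonal Z)
    (hcomp : ∀ i j, i ≠ j → relComp (S i) (S j) = Set.univ) :
    ∀ a : Z, Set.ncard {b | (a, b) ∈ S 0} = q := by
  classical
  intro a
  -- uniqueness of the index for a pair of distinct points
  have huniq : ∀ (x y : Z) (i j : Fin (q + 1)), x ≠ y →
      (x, y) ∈ S i → (x, y) ∈ S j → i = j := by
    intro x y i j hxy hi hj
    by_contra hij
    have : (x, y) ∈ Set.diagonal Z := by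
      rw [← hinter i j hij]; exact ⟨hi, hj⟩
    exact hxy this
  have h01 : (0 : Fin (q + 1)) ≠ 1 := by
    have : (1 : ℕ) < q + 1 := by omega
    simp [Fin.ext_iff, Fin.val_one', Nat.mod_eq_of_lt this]
  -- S 1 is nontrivial: get u ≠ v with (u,v) ∈ S 1
  obtain ⟨u, v, huv1, huv⟩ : ∃ u v : Z, (u, v) ∈ S 1 ∧ u ≠ v := by
    by_contra h
    push_neg at h
    apply hnontriv 1
    ext ⟨x, y⟩
    constructor
    · intro hx
      exact h x y hx
    · intro hd
      have : x = y := hd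
      subst this
      exact hrefl 1 x
  -- find z with (z, a) ∉ S 0
  obtain ⟨z, hz⟩ : ∃ z : Z, (z, a) ∉ S 0 := by
    by_cases hu : (u, a) ∈ S 0
    · refine ⟨v, fun hv => ?_⟩
      have : (u, v) ∈ S 0 := htrans 0 u a v hu (hsymm 0 v a hv)
      exact h01 (huniq u v 0 1 huv this huv1)
    · exact ⟨u, hu⟩
  -- any b in the class of a gets a unique index i ≠ 0 with (z,b) ∈ S i
  have hzb : ∀ b : Z, (a, b) ∈ S 0 → z ≠ b := by
    intro b hb h
    exact hz (h ▸ hsymm 0 a b hb)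
  have hmem : ∀ b : Z, (a, b) ∈ S 0 → ∃ i : Fin (q + 1), i ≠ 0 ∧ (z, b) ∈ S i := by
    intro b hb
    have hzub : (z, b) ∈ ⋃ i, S i := by rw [hunion]; trivial
    obtain ⟨i, hi⟩ := Set.mem_iUnion.mp hzub
    refine ⟨i, ?_, hi⟩
    rintro rfl
    exact hz (htrans 0 z b a hi (hsymm 0 a b hb))
  -- the function
  let f : {b : Z // (a, b) ∈ S 0} → {i : Fin (q + 1) // i ≠ 0} :=
    fun b => ⟨(hmem b.1 b.2).choose, (hmem b.1 b.2).choose_spec.1⟩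
  have hfspec : ∀ b : {b : Z // (a, b) ∈ S 0}, (z, b.1) ∈ S (f b).1 :=
    fun b => (hmem b.1 b.2).choose_spec.2
  have hfbij : Function.Bijective f := by
    constructor
    · rintro ⟨b, hb⟩ ⟨b', hb'⟩ hff
      have h1 : (z, b) ∈ S (f ⟨b, hb⟩).1 := hfspec ⟨b, hb⟩
      have h2 : (z, b') ∈ S (f ⟨b, hb⟩).1 := by
        rw [hff]; exact hfspec ⟨b', hb'⟩
      by_contra hne
      have hbb' : b ≠ b' := fun h => hne (by simp [h])
      have hS : (b, b') ∈ S (f ⟨b, hb⟩).1 :=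
        htrans _ b z b' (hsymm _ z b h1) h2
      have hS0 : (b, b') ∈ S 0 := htrans 0 b a b' (hsymm 0 a b hb) hb'
      exact (f ⟨b, hb⟩).2 (huniq b b' _ 0 hbb' hS hS0)
    · rintro ⟨i, hi⟩
      have hcu := hcomp 0 i (Ne.symm hi)
      have : (z, a) ∈ relComp (S 0) (S i) := by rw [hcu]; trivial
      obtain ⟨c, hci, hc0⟩ := this
      have hac : (a, c) ∈ S 0 := hsymm 0 c a hc0
      refine ⟨⟨c, hac⟩, ?_⟩
      have hzc : z ≠ c := hzb c hac
      have := huniq z c (f ⟨c, hac⟩).1 i hzc (hfspec ⟨c, hac⟩) hci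
      exact Subtype.ext this
  -- conclude via cardinality
  have hcard : Set.ncard {b | (a, b) ∈ S 0} = Nat.card {i : Fin (q + 1) // i ≠ 0} := by
    rw [← Nat.card_coe_set_eq]
    exact Nat.card_congr (Equiv.ofBijective f hfbij)
  rw [hcard, Nat.card_eq_fintype_card]
  rw [Fintype.card_subtype_compl, Fintype.card_fin, Fintype.card_subtype_eq]
  omega
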